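/- For all 0 < η < 1, 1 < α < 1/η, and (t,s) ∈ [0,1]×[0,1], the Green's function G(t,s) satisfies 0 ≤ G(t,s) ≤ g₀(s) where g₀(s) = (1+α)/(1-αη) · s(1-s). -/
import Mathlib

open Set

noncomputable def greenG (η α t s : ℝ) : ℝ :=
  (1 / (2 * (1 - α * η))) *
    (if s ≤ min η t then (2 * t * s - s ^ 2) * (1 - α * η) + t ^ 2 * s * (α - 1)
     else if t ≤ s ∧ s ≤ η then t ^ 2 * (1 - α * η) + t ^ 2 * s * (α - 1)
     else if η ≤ s ∧ s ≤ t then (2 * t * s - s ^ 2) * (1 - α * η) + t ^ 2 * (α * η - s)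
     else t ^ 2 * (1 - s))

noncomputable def g0 (η α s : ℝ) : ℝ := (1 + α) / (1 - α * η) * (s * (1 - s))

lemma auxle (D e c q : ℝ) (hD : 0 < D) (h : e ≤ 2 * (c * q)) :
    (1 / (2 * D)) * e ≤ c / D * q := by
  rw [show (1:ℝ)/(2*D)*e = e/(2*D) by ring, show c/D*q = (c*q)/D by ring,
    div_le_div_iff₀ (by linarith) hD]
  nlinarith

theorem stmt0 (η α : ℝ) (hη0 : 0 < η) (hη1 : η < 1) (hα1 : 1 < α) (hα2 : α < 1 / η) :
    ∀ t ∈ Icc (0:ℝ) 1, ∀ s ∈ Icc (0:ℝ) 1,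
      0 ≤ greenG η α t s ∧ greenG η α t s ≤ g0 η α s := by
  have hD : 0 < 1 - α * η := by
    have : α * η < 1 := by
      have := (lt_div_iff₀ hη0).mp hα2; linarith
    linarith
  rintro t ⟨ht0, ht1⟩ s ⟨hs0, hs1⟩
  unfold greenG g0
  split_ifs with h1 h2 h3
  · -- s ≤ min η t
    obtain ⟨hsη, hst⟩ := le_min_iff.mp h1
    constructor
    · apply mul_nonneg (by positivity)
      nlinarith [mul_nonneg (mul_nonneg hs0 (by linarith : (0:ℝ) ≤ 2*t - s)) hD.le,
        mul_nonneg (mul_nonneg (sq_nonneg t) hs0) (by linarith : (0:ℝ) ≤ α - 1)]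
    · apply auxle _ _ _ _ hD
      have hbr : 0 ≤ 2*(1+α)*(1-s) - (2-s)*(1-α*η) - (α-1) := by
        nlinarith [mul_nonneg (sub_nonneg.2 hsη) (by nlinarith : (0:ℝ) ≤ 2*(1+α) - (1-α*η)),
          mul_nonneg (sub_nonneg.2 hη1.le) (by nlinarith : (0:ℝ) ≤ α*(1+η)+1)]
      nlinarith [mul_nonneg hs0 hbr,
        mul_nonneg (mul_nonneg hs0 (by linarith : (0:ℝ) ≤ 2 - s - (2*t - s))) hD.le,
        mul_nonneg (mul_nonneg hs0 (by nlinarith : (0:ℝ) ≤ 1 - t^2)) (by linarith : (0:ℝ) ≤ α - 1)]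
  · -- t ≤ s ≤ η
    obtain ⟨hts, hsη⟩ := h2
    constructor
    · apply mul_nonneg (by positivity)
      nlinarith [mul_nonneg (sq_nonneg t) hD.le,
        mul_nonneg (mul_nonneg (sq_nonneg t) hs0) (by linarith : (0:ℝ) ≤ α - 1)]
    · apply auxle _ _ _ _ hD
      have hfac : 0 ≤ (1 - α*η) + s*(α-1) := by nlinarith
      have hbr : 0 ≤ 2*(1+α)*(1-s) - (1-α*η) - s*(α-1) := by
        nlinarith [mul_nonneg (sub_nonneg.2 hsη) (by linarith : (0:ℝ) ≤ 3*α + 1),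
          mul_nonneg (sub_nonneg.2 hη1.le) (by linarith : (0:ℝ) ≤ 1 + 2*α)]
      have ht2s : t^2 ≤ s := by nlinarith
      nlinarith [mul_nonneg hs0 hbr, mul_nonneg (sub_nonneg.2 ht2s) hfac]
  · -- η ≤ s ≤ t
    obtain ⟨hηs, hst⟩ := h3
    have hα0 : (0:ℝ) ≤ α := by linarith
    have hsq : (t-s)^2 ≤ (1-s)^2 := by nlinarith
    constructor
    · apply mul_nonneg (by positivity)
      nlinarith [mul_nonneg hs0 (by nlinarith [mul_nonneg (sub_nonneg.2 hst) (sub_nonneg.2 ht1)] : (0:ℝ) ≤ 2*t - s - t^2),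
        mul_nonneg (mul_nonneg hα0 hη0.le) (sq_nonneg (t - s))]
    · apply auxle _ _ _ _ hD
      nlinarith [mul_nonneg hs0 (sq_nonneg (1 - t)),
        mul_nonneg (mul_nonneg hα0 hη0.le) (by linarith : (0:ℝ) ≤ (1-s)^2 - (t-s)^2),
        mul_nonneg (mul_nonneg hα0 (sub_nonneg.2 hηs)) (sq_nonneg (1-s)),
        mul_nonneg (mul_nonneg hα0 hs0) (mul_nonneg hs0 (sub_nonneg.2 hs1)),
        mul_nonneg (mul_nonneg (by linarith : (0:ℝ) ≤ 1+α) hs0) (sub_nonneg.2 hs1)]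
  · -- else: t ≤ s
    have hts : t ≤ s := by
      by_contra h
      push_neg at h
      rcases le_or_gt η s with hc | hc
      · exact h3 ⟨hc, h.le⟩
      · exact h1 (le_min hc.le h.le)
    constructor
    · apply mul_nonneg (by positivity)
      nlinarith [sq_nonneg t]
    · apply auxle _ _ _ _ hD
      have ht2s : t^2 ≤ s := by nlinarith
      nlinarith [mul_nonneg (sub_nonneg.2 ht2s) (sub_nonneg.2 hs1),
        mul_nonneg (mul_nonneg (by linarith : (0:ℝ) ≤ 1 + 2*α) hs0) (sub_nonneg.2 hs1)]
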